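/- There exist infinitely many primitive covering numbers that do not satisfy Sun's condition; in particular, for each δ ≥ 3 there exist infinitely many primitive covering numbers of the form 2^β · q_k · q_{k+1} with consecutive primes q_k < q_{k+1} and β ≤ q_k − 3, and each such number violates Sun's condition. This disproves Sun's conjecture that every primitive covering number p_1^{a_1} ⋯ p_r^{a_r} satisfies ∏_{0<t<s}(a_t+1) ≥ p_s − 1 + δ_{r,s} for all s. -/

import Mathlib

/-- A finite set of congruences `(x, m)` covers all the integers. -/
def CoversAll (S : Finset (ℕ × ℕ)) : Prop :=
  ∀ z : ℤ, ∃ c ∈ S, (c.2 : ℤ) ∣ z - (c.1 : ℤ)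

/-- The moduli appearing in `S` are pairwise distinct. -/
def DistinctModuli (S : Finset (ℕ × ℕ)) : Prop :=
  ∀ c ∈ S, ∀ c' ∈ S, c.2 = c'.2 → c = c'

/-- `L` is a covering number: there is a covering system whose moduli are
distinct divisors of `L` greater than `1`. -/
def IsCoveringNumber (L : ℕ) : Prop :=
  ∃ S : Finset (ℕ × ℕ), CoversAll S ∧ DistinctModuli S ∧
    ∀ c ∈ S, 1 < c.2 ∧ c.2 ∣ L

/-- `L` is a primitive covering number. -/
def IsPrimitiveCoveringNumber (L : ℕ) : Prop :=
  IsCoveringNumber L ∧ ∀ d : ℕ, d ∣ L → d ≠ L → ¬ IsCoveringNumber d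

/-- Sun's condition for `L = p_1^{a_1} ⋯ p_r^{a_r}` (primes increasing):
for all `1 ≤ s ≤ r`, `∏_{0<t<s} (a_t + 1) ≥ p_s - 1 + δ_{r,s}`.
Here the primes of `L` are listed in increasing order and indexed from `0`. -/
def SunCondition (L : ℕ) : Prop :=
  ∀ s : ℕ, s < (L.primeFactors.sort (· ≤ ·)).length →
    (((L.primeFactors.sort (· ≤ ·)).take s).map
        (fun q => L.factorization q + 1)).prod ≥
      (L.primeFactors.sort (· ≤ ·)).getD s 0 - 1 +
        (if s = (L.primeFactors.sort (· ≤ ·)).length - 1 then 1 else 0)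

def NatCovers (S : Finset (ℕ × ℕ)) : Prop :=
  ∀ n : ℕ, ∃ c ∈ S, n % c.2 = c.1 % c.2

lemma natCovers_of_coversAll {S : Finset (ℕ × ℕ)} (h : CoversAll S) : NatCovers S := by
  intro n
  obtain ⟨c, hc, hdvd⟩ := h n
  refine ⟨c, hc, ?_⟩
  have h1 : (c.2:ℤ) ∣ (c.1:ℤ) - (n:ℤ) := by
    have := hdvd.neg_right
    simpa [neg_sub] using this
  exact (Nat.modEq_iff_dvd).mpr h1

lemma coversAll_of_natCovers {S : Finset (ℕ × ℕ)} {L : ℕ} (hL : 0 < L)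
    (hdvd : ∀ c ∈ S, c.2 ∣ L) (h : NatCovers S) : CoversAll S := by
  intro z
  set n : ℕ := (z % L).toNat with hn
  have hz : (n : ℤ) = z % L :=
    Int.toNat_of_nonneg (Int.emod_nonneg z (by exact_mod_cast hL.ne'))
  obtain ⟨c, hc, hmod⟩ := h n
  refine ⟨c, hc, ?_⟩
  have h1 : (c.2:ℤ) ∣ (c.1:ℤ) - (n:ℤ) := (Nat.modEq_iff_dvd).mp hmod
  have h2 : (c.2:ℤ) ∣ z - (n:ℤ) := by
    have hcL : (c.2:ℤ) ∣ (L:ℤ) := Int.natCast_dvd_natCast.mpr (hdvd c hc)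
    refine hcL.trans ?_
    rw [hz, Int.emod_def]
    exact ⟨z / L, by ring⟩
  have heq : z - (c.1:ℤ) = (z - (n:ℤ)) - ((c.1:ℤ) - (n:ℤ)) := by ring
  rw [heq]
  exact h2.sub h1

lemma card_filter_mod {m t r : ℕ} (hm : 0 < m) (hr : r < m) :
    ((Finset.range (m * t)).filter (fun x => x % m = r)).card = t := by
  have himg : ((Finset.range (m * t)).filter (fun x => x % m = r))
      = (Finset.range t).image (fun j => m * j + r) := by
    ext x
    simp only [Finset.mem_filter, Finset.mem_range, Finset.mem_image]
    constructor
    · rintro ⟨hlt, hmod⟩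
      refine ⟨x / m, by rw [Nat.div_lt_iff_lt_mul hm, mul_comm]; exact hlt, ?_⟩
      rw [← hmod]
      exact Nat.div_add_mod x m
    · rintro ⟨j, hj, rfl⟩
      constructor
      · have h1 : m * (j+1) ≤ m * t := Nat.mul_le_mul_left m hj
        rw [Nat.mul_succ] at h1
        omega
      · rw [Nat.mul_add_mod]
        exact Nat.mod_eq_of_lt hr
  rw [himg, Finset.card_image_of_injective _ (fun a b hab => by
    have : m * a = m * b := by omega
    exact Nat.eq_of_mul_eq_mul_left hm this), Finset.card_range]

lemma sum_pow_sub : ∀ γ : ℕ, (∑ i ∈ Finset.Icc 1 γ, 2^(γ - i)) = 2^γ - 1 := by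
  intro γ
  induction γ with
  | zero => simp
  | succ γ ih =>
    rw [Finset.sum_Icc_succ_top (by omega)]
    have hcongr : ∑ i ∈ Finset.Icc 1 γ, 2^(γ + 1 - i) = ∑ i ∈ Finset.Icc 1 γ, 2^(γ - i) * 2 := by
      refine Finset.sum_congr rfl (fun i hi => ?_)
      have hi' : 1 ≤ i ∧ i ≤ γ := Finset.mem_Icc.mp hi
      have : γ + 1 - i = (γ - i) + 1 := by omega
      rw [this, pow_succ]
    rw [hcongr, ← Finset.sum_mul, ih]
    have h0 : γ + 1 - (γ + 1) = 0 := by omega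
    rw [h0, pow_zero]
    have h1 : 1 ≤ 2^γ := Nat.one_le_two_pow
    have h2 : 2^(γ+1) = 2^γ * 2 := by rw [pow_succ]
    omega

lemma exists_x0 {S : Finset (ℕ × ℕ)} (hdm : DistinctModuli S) (γ : ℕ) :
    ∃ x0, x0 < 2^γ ∧ ∀ c ∈ S, ∀ i, 1 ≤ i → i ≤ γ → c.2 = 2^i → ¬ (x0 % 2^i = c.1 % 2^i) := by
  classical
  set B := (Finset.Icc 1 γ).biUnion (fun i => (Finset.range (2^γ)).filter
      (fun x => ∃ c ∈ S, c.2 = 2^i ∧ x % 2^i = c.1 % 2^i)) with hB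
  have hbound : ∀ i ∈ Finset.Icc 1 γ, ((Finset.range (2^γ)).filter
      (fun x => ∃ c ∈ S, c.2 = 2^i ∧ x % 2^i = c.1 % 2^i)).card ≤ 2^(γ - i) := by
    intro i hi
    obtain ⟨h1i, hiγ⟩ := Finset.mem_Icc.mp hi
    by_cases hex : ∃ c ∈ S, c.2 = 2^i
    · obtain ⟨c₀, hc₀, hm₀⟩ := hex
      have hsub : ((Finset.range (2^γ)).filter
          (fun x => ∃ c ∈ S, c.2 = 2^i ∧ x % 2^i = c.1 % 2^i)) ⊆
          ((Finset.range (2^γ)).filter (fun x => x % (2^i) = c₀.1 % 2^i)) := by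
        intro x hx
        simp only [Finset.mem_filter] at hx ⊢
        obtain ⟨hxr, c, hc, hcm, hxm⟩ := hx
        have hcc : c = c₀ := hdm c hc c₀ hc₀ (hcm.trans hm₀.symm)
        exact ⟨hxr, by rw [← hcc]; exact hxm⟩
      refine (Finset.card_le_card hsub).trans ?_
      have hpow : 2^γ = 2^i * 2^(γ - i) := by
        rw [← pow_add]; congr 1; omega
      rw [hpow]
      exact le_of_eq (card_filter_mod (pow_pos (by norm_num : (0:ℕ) < 2) i)
        (Nat.mod_lt _ (pow_pos (by norm_num : (0:ℕ) < 2) i)))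
    · have : ((Finset.range (2^γ)).filter
          (fun x => ∃ c ∈ S, c.2 = 2^i ∧ x % 2^i = c.1 % 2^i)) = ∅ := by
        refine Finset.filter_false_of_mem (fun x hx => ?_)
        rintro ⟨c, hc, hcm, -⟩
        exact hex ⟨c, hc, hcm⟩
      rw [this]
      simp
  have hcard : B.card ≤ 2^γ - 1 := by
    calc B.card ≤ ∑ i ∈ Finset.Icc 1 γ, ((Finset.range (2^γ)).filter
        (fun x => ∃ c ∈ S, c.2 = 2^i ∧ x % 2^i = c.1 % 2^i)).card := Finset.card_biUnion_le
    _ ≤ ∑ i ∈ Finset.Icc 1 γ, 2^(γ - i) := Finset.sum_le_sum hbound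
    _ = 2^γ - 1 := sum_pow_sub γ
  have hne : (Finset.range (2^γ) \ B).Nonempty := by
    rw [← Finset.card_pos]
    have h1 : Finset.card (Finset.range (2^γ)) - B.card ≤ (Finset.range (2^γ) \ B).card :=
      Finset.le_card_sdiff _ _
    have h2 : 1 ≤ 2^γ := Nat.one_le_two_pow
    rw [Finset.card_range] at h1
    omega
  obtain ⟨x0, hx0⟩ := hne
  rw [Finset.mem_sdiff, Finset.mem_range] at hx0
  refine ⟨x0, hx0.1, fun c hc i h1i hiγ hcm heq => hx0.2 ?_⟩
  refine Finset.mem_biUnion.mpr ⟨i, Finset.mem_Icc.mpr ⟨h1i, hiγ⟩, ?_⟩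
  exact Finset.mem_filter.mpr ⟨Finset.mem_range.mpr hx0.1, c, hc, hcm, heq⟩



-- classification of divisors of 2^γ * N, N odd
lemma dvd_two_pow_mul {γ N m : ℕ} (h : m ∣ 2^γ * N) :
    ∃ i ≤ γ, ∃ d, d ∣ N ∧ m = 2^i * d := by
  obtain ⟨m1, m2, hm1, hm2, rfl⟩ := exists_dvd_and_dvd_of_dvd_mul h
  obtain ⟨i, hi, rfl⟩ := (Nat.dvd_prime_pow Nat.prime_two).mp hm1
  exact ⟨i, hi, m2, hm2, rfl⟩

lemma dvd_prime_mul {p q m : ℕ} (hp : p.Prime) (hq : q.Prime) (h : m ∣ p * q) :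
    m = 1 ∨ m = p ∨ m = q ∨ m = p * q := by
  obtain ⟨m1, m2, hm1, hm2, rfl⟩ := exists_dvd_and_dvd_of_dvd_mul h
  rcases (Nat.Prime.eq_one_or_self_of_dvd hp m1 hm1) with rfl | rfl <;>
    rcases (Nat.Prime.eq_one_or_self_of_dvd hq m2 hm2) with rfl | rfl <;> simp

noncomputable def crtRes (m1 m2 a1 a2 : ℕ) : ℕ :=
  if h : Nat.Coprime m1 m2 then (Nat.chineseRemainder h a1 a2).1 else 0

lemma crtRes_left {m1 m2 a1 a2 : ℕ} (h : Nat.Coprime m1 m2) :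
    crtRes m1 m2 a1 a2 ≡ a1 [MOD m1] := by
  rw [crtRes, dif_pos h]
  exact (Nat.chineseRemainder h a1 a2).2.1

lemma crtRes_right {m1 m2 a1 a2 : ℕ} (h : Nat.Coprime m1 m2) :
    crtRes m1 m2 a1 a2 ≡ a2 [MOD m2] := by
  rw [crtRes, dif_pos h]
  exact (Nat.chineseRemainder h a1 a2).2.2

-- factorization helpers
lemma fact_pow_mul_pow_mul_pow {p q i e f : ℕ} (hp : p.Prime) (hq : q.Prime)
    (hp2 : p ≠ 2) (hq2 : q ≠ 2) (hpq : p ≠ q) :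
    (2^i * p^e * q^f).factorization 2 = i ∧
    (2^i * p^e * q^f).factorization p = e ∧
    (2^i * p^e * q^f).factorization q = f := by
  have h2 : (2:ℕ).Prime := Nat.prime_two
  have hne1 : (2:ℕ)^i ≠ 0 := pow_ne_zero _ (by norm_num)
  have hne2 : p^e ≠ 0 := pow_ne_zero _ hp.pos.ne'
  have hne3 : q^f ≠ 0 := pow_ne_zero _ hq.pos.ne'
  rw [Nat.factorization_mul (by positivity) hne3, Nat.factorization_mul hne1 hne2,
    Nat.Prime.factorization_pow, Nat.Prime.factorization_pow, Nat.Prime.factorization_pow]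
  · simp only [Finsupp.add_apply, Finsupp.single_apply]
    refine ⟨?_, ?_, ?_⟩ <;> simp [hp2, hq2, hpq, Ne.symm hp2, Ne.symm hq2, Ne.symm hpq]
  all_goals assumption

lemma form_inj {p q : ℕ} (hp : p.Prime) (hq : q.Prime)
    (hp2 : p ≠ 2) (hq2 : q ≠ 2) (hpq : p ≠ q)
    {i j e f e' f' : ℕ}
    (h : 2^i * p^e * q^f = 2^j * p^e' * q^f') : i = j ∧ e = e' ∧ f = f' := by
  obtain ⟨h1, h2, h3⟩ := fact_pow_mul_pow_mul_pow (i := i) (e := e) (f := f) hp hq hp2 hq2 hpq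
  obtain ⟨h1', h2', h3'⟩ := fact_pow_mul_pow_mul_pow (i := j) (e := e') (f := f') hp hq hp2 hq2 hpq
  rw [h] at h1 h2 h3
  exact ⟨h1.symm.trans h1', h2.symm.trans h2', h3.symm.trans h3'⟩

lemma not_cov_pow (γ : ℕ) : ¬ IsCoveringNumber (2^γ) := by
  rintro ⟨S, hcov, hdm, hS⟩
  obtain ⟨x0, hx0lt, hx0⟩ := exists_x0 hdm γ
  obtain ⟨c, hc, hmod⟩ := natCovers_of_coversAll hcov x0
  obtain ⟨h1c, hdvd⟩ := hS c hc
  obtain ⟨i, hiγ, hi2⟩ := (Nat.dvd_prime_pow Nat.prime_two).mp hdvd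
  have h1i : 1 ≤ i := by
    rcases Nat.eq_zero_or_pos i with rfl | h
    · rw [hi2, pow_zero] at h1c; omega
    · exact h
  rw [hi2] at hmod
  exact hx0 c hc i h1i hiγ hi2 hmod

lemma coprime_two_pow_prime {p : ℕ} (hp : p.Prime) (hp2 : p ≠ 2) (γ : ℕ) :
    Nat.Coprime (2^γ) p :=
  Nat.Coprime.pow_left _ ((Nat.coprime_primes Nat.prime_two hp).mpr (Ne.symm hp2))

lemma not_cov_pow_mul_prime {p γ : ℕ} (hp : p.Prime) (hp2 : p ≠ 2) (hγp : γ + 1 < p) :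
    ¬ IsCoveringNumber (2^γ * p) := by
  classical
  rintro ⟨S, hcov, hdm, hS⟩
  obtain ⟨x0, hx0lt, hx0⟩ := exists_x0 hdm γ
  set Aset := S.filter (fun c => p ∣ c.2) with hAset
  have hp2' : ¬ (2 ∣ p) := fun h => hp2 ((Nat.prime_dvd_prime_iff_eq Nat.prime_two hp).mp h).symm
  have hAform : ∀ c ∈ Aset, ∃ i ≤ γ, c.2 = 2^i * p := by
    intro c hc
    obtain ⟨hcS, hpc⟩ := Finset.mem_filter.mp hc
    obtain ⟨i, hiγ, d, hd, hform⟩ := dvd_two_pow_mul (γ := γ) (hS c hcS).2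
    rcases hp.eq_one_or_self_of_dvd d hd with rfl | hdp
    · exfalso
      rw [hform, mul_one] at hpc
      exact hp2 ((Nat.prime_dvd_prime_iff_eq hp Nat.prime_two).mp (hp.dvd_of_dvd_pow hpc))
    · rw [hdp] at hform
      exact ⟨i, hiγ, hform⟩
  have hAcard : Aset.card ≤ γ + 1 := by
    have h1 : Aset.card ≤ ((Finset.range (γ+1)).image (fun i => 2^i * p)).card := by
      refine Finset.card_le_card_of_injOn (fun c => c.2) ?_ ?_
      · intro c hc
        obtain ⟨i, hiγ, hform⟩ := hAform c hc
        exact Finset.mem_image.mpr ⟨i, Finset.mem_range.mpr (by omega), hform.symm⟩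
      · intro c hc c' hc' hcc
        exact hdm c (Finset.mem_filter.mp hc).1 c' (Finset.mem_filter.mp hc').1 hcc
    exact h1.trans ((Finset.card_image_le).trans (by simp))
  set Aimg := Aset.image (fun c => c.1 % p) with hAimg
  have hAimgcard : Aimg.card < p := lt_of_le_of_lt (Finset.card_image_le.trans hAcard) hγp
  have hU : ((Finset.range p) \ Aimg).Nonempty := by
    rw [← Finset.card_pos]
    have := Finset.le_card_sdiff Aimg (Finset.range p)
    rw [Finset.card_range] at this
    omega
  obtain ⟨u, hu⟩ := hU
  rw [Finset.mem_sdiff, Finset.mem_range] at hu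
  have hcop := coprime_two_pow_prime hp hp2 γ
  set n := crtRes (2^γ) p x0 u with hn
  obtain ⟨c, hc, hmod⟩ := natCovers_of_coversAll hcov n
  obtain ⟨h1c, hdvd⟩ := hS c hc
  obtain ⟨i, hiγ, d, hd, hform⟩ := dvd_two_pow_mul (γ := γ) hdvd
  rcases hp.eq_one_or_self_of_dvd d hd with rfl | hdp
  · rw [mul_one] at hform
    have h1i : 1 ≤ i := by
      rcases Nat.eq_zero_or_pos i with rfl | h
      · rw [hform, pow_zero] at h1c; omega
      · exact h
    refine hx0 c hc i h1i hiγ hform ?_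
    have hnx : x0 ≡ n [MOD 2^i] :=
      (Nat.ModEq.of_dvd (pow_dvd_pow 2 hiγ) (crtRes_left hcop)).symm
    rw [hform] at hmod
    exact hnx.trans hmod
  · rw [hdp] at hform
    have hpc2 : p ∣ c.2 := by rw [hform]; exact dvd_mul_left p (2^i)
    have hcA : c ∈ Aset := Finset.mem_filter.mpr ⟨hc, hpc2⟩
    have hnu : n ≡ u [MOD p] := crtRes_right hcop
    have hnc : n ≡ c.1 [MOD p] := Nat.ModEq.of_dvd hpc2 hmod
    have : c.1 % p = u := by
      have := (hnu.symm.trans hnc : u ≡ c.1 [MOD p])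
      rw [Nat.ModEq, Nat.mod_eq_of_lt hu.1] at this
      exact this.symm
    exact hu.2 (Finset.mem_image.mpr ⟨c, hcA, this⟩)

lemma not_cov_pow_mul_two_primes {p q γ : ℕ} (hp : p.Prime) (hq : q.Prime)
    (hp2 : p ≠ 2) (hq2 : q ≠ 2) (hpq : p ≠ q)
    (hγp : γ + 1 < p) (hγq : γ + 1 < q)
    (hkey : γ + 1 < (p - (γ+1)) * (q - (γ+1))) :
    ¬ IsCoveringNumber (2^γ * p * q) := by
  classical
  rintro ⟨S, hcov, hdm, hS⟩
  obtain ⟨x0, hx0lt, hx0⟩ := exists_x0 hdm γ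
  have hSdvd : ∀ c ∈ S, c.2 ∣ 2^γ * (p * q) := by
    intro c hc
    have := (hS c hc).2
    rwa [← mul_assoc]
  -- classification of moduli
  have hclass : ∀ c ∈ S, ∃ i ≤ γ,
      c.2 = 2^i ∨ c.2 = 2^i * p ∨ c.2 = 2^i * q ∨ c.2 = 2^i * (p * q) := by
    intro c hc
    obtain ⟨i, hiγ, d, hd, hform⟩ := dvd_two_pow_mul (γ := γ) (hSdvd c hc)
    rcases dvd_prime_mul hp hq hd with h1 | h1 | h1 | h1 <;> rw [h1] at hform
    · exact ⟨i, hiγ, Or.inl (by rw [hform, mul_one])⟩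
    · exact ⟨i, hiγ, Or.inr (Or.inl hform)⟩
    · exact ⟨i, hiγ, Or.inr (Or.inr (Or.inl hform))⟩
    · exact ⟨i, hiγ, Or.inr (Or.inr (Or.inr hform))⟩
  have hpd2 : ∀ i : ℕ, ¬ p ∣ 2^i := by
    intro i h
    exact hp2 ((Nat.prime_dvd_prime_iff_eq hp Nat.prime_two).mp (hp.dvd_of_dvd_pow h))
  have hqd2 : ∀ i : ℕ, ¬ q ∣ 2^i := by
    intro i h
    exact hq2 ((Nat.prime_dvd_prime_iff_eq hq Nat.prime_two).mp (hq.dvd_of_dvd_pow h))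
  have hpd2q : ∀ i : ℕ, ¬ p ∣ 2^i * q := by
    intro i h
    rcases (Nat.Prime.dvd_mul hp).mp h with h' | h'
    · exact hpd2 i h'
    · exact hpq ((Nat.prime_dvd_prime_iff_eq hp hq).mp h')
  have hqd2p : ∀ i : ℕ, ¬ q ∣ 2^i * p := by
    intro i h
    rcases (Nat.Prime.dvd_mul hq).mp h with h' | h'
    · exact hqd2 i h'
    · exact hpq (((Nat.prime_dvd_prime_iff_eq hq hp).mp h').symm)
  set Aset := S.filter (fun c => p ∣ c.2 ∧ ¬ q ∣ c.2) with hAset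
  set Bset := S.filter (fun c => q ∣ c.2 ∧ ¬ p ∣ c.2) with hBset
  set Cset := S.filter (fun c => p ∣ c.2 ∧ q ∣ c.2) with hCset
  have hAform : ∀ c ∈ Aset, ∃ i ≤ γ, c.2 = 2^i * p := by
    intro c hc
    obtain ⟨hcS, hpc, hqc⟩ := Finset.mem_filter.mp hc
    obtain ⟨i, hiγ, hform⟩ := hclass c hcS
    rcases hform with h | h | h | h
    · rw [h] at hpc; exact absurd hpc (hpd2 i)
    · exact ⟨i, hiγ, h⟩
    · rw [h] at hpc; exact absurd hpc (hpd2q i)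
    · rw [h] at hqc
      exact absurd (by rw [← mul_assoc]; exact dvd_mul_left q (2^i*p)) hqc
  have hBform : ∀ c ∈ Bset, ∃ i ≤ γ, c.2 = 2^i * q := by
    intro c hc
    obtain ⟨hcS, hqc, hpc⟩ := Finset.mem_filter.mp hc
    obtain ⟨i, hiγ, hform⟩ := hclass c hcS
    rcases hform with h | h | h | h
    · rw [h] at hqc; exact absurd hqc (hqd2 i)
    · rw [h] at hqc; exact absurd hqc (hqd2p i)
    · exact ⟨i, hiγ, h⟩
    · rw [h] at hpc
      exact absurd (by rw [mul_comm p q, ← mul_assoc]; exact dvd_mul_left p (2^i*q)) hpc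
  have hCform : ∀ c ∈ Cset, ∃ i ≤ γ, c.2 = 2^i * (p * q) := by
    intro c hc
    obtain ⟨hcS, hpc, hqc⟩ := Finset.mem_filter.mp hc
    obtain ⟨i, hiγ, hform⟩ := hclass c hcS
    rcases hform with h | h | h | h
    · rw [h] at hpc; exact absurd hpc (hpd2 i)
    · rw [h] at hqc; exact absurd hqc (hqd2p i)
    · rw [h] at hpc; exact absurd hpc (hpd2q i)
    · exact ⟨i, hiγ, h⟩
  have hcardgen : ∀ (T : Finset (ℕ × ℕ)) (M : ℕ), T ⊆ S →
      (∀ c ∈ T, ∃ i ≤ γ, c.2 = 2^i * M) → T.card ≤ γ + 1 := by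
    intro T M hTS hTform
    have h1 : T.card ≤ ((Finset.range (γ+1)).image (fun i => 2^i * M)).card := by
      refine Finset.card_le_card_of_injOn (fun c => c.2) ?_ ?_
      · intro c hc
        obtain ⟨i, hiγ, hform⟩ := hTform c hc
        exact Finset.mem_image.mpr ⟨i, Finset.mem_range.mpr (by omega), hform.symm⟩
      · intro c hc c' hc' hcc
        exact hdm c (hTS hc) c' (hTS hc') hcc
    exact h1.trans ((Finset.card_image_le).trans (by simp))
  have hAcard : Aset.card ≤ γ + 1 :=
    hcardgen Aset p (Finset.filter_subset _ _) hAform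
  have hBcard : Bset.card ≤ γ + 1 :=
    hcardgen Bset q (Finset.filter_subset _ _) hBform
  have hCcard : Cset.card ≤ γ + 1 :=
    hcardgen Cset (p*q) (Finset.filter_subset _ _) hCform
  set Aimg := Aset.image (fun c => c.1 % p) with hAimg
  set Bimg := Bset.image (fun c => c.1 % q) with hBimg
  set Cimg := Cset.image (fun c => (c.1 % p, c.1 % q)) with hCimg
  set U := (Finset.range p) \ Aimg with hU
  set V := (Finset.range q) \ Bimg with hV
  have hUcard : p - (γ+1) ≤ U.card := by
    have h1 : (Finset.range p).card - Aimg.card ≤ U.card := Finset.le_card_sdiff _ _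
    have h2 : Aimg.card ≤ γ + 1 := Finset.card_image_le.trans hAcard
    rw [Finset.card_range] at h1
    omega
  have hVcard : q - (γ+1) ≤ V.card := by
    have h1 : (Finset.range q).card - Bimg.card ≤ V.card := Finset.le_card_sdiff _ _
    have h2 : Bimg.card ≤ γ + 1 := Finset.card_image_le.trans hBcard
    rw [Finset.card_range] at h1
    omega
  have hW : ((U ×ˢ V) \ Cimg).Nonempty := by
    rw [← Finset.card_pos]
    have h1 : (U ×ˢ V).card - Cimg.card ≤ ((U ×ˢ V) \ Cimg).card := Finset.le_card_sdiff _ _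
    have h2 : (γ+1) < (U ×ˢ V).card := by
      rw [Finset.card_product]
      calc γ + 1 < (p - (γ+1)) * (q - (γ+1)) := hkey
      _ ≤ U.card * V.card := Nat.mul_le_mul hUcard hVcard
    have h3 : Cimg.card ≤ γ + 1 := Finset.card_image_le.trans hCcard
    omega
  obtain ⟨⟨u, v⟩, huv⟩ := hW
  rw [Finset.mem_sdiff, Finset.mem_product] at huv
  obtain ⟨⟨huU, hvV⟩, hnotC⟩ := huv
  rw [hU, Finset.mem_sdiff, Finset.mem_range] at huU
  rw [hV, Finset.mem_sdiff, Finset.mem_range] at hvV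
  have hcopq : Nat.Coprime p q := (Nat.coprime_primes hp hq).mpr hpq
  have hcop2 : Nat.Coprime (2^γ) (p * q) :=
    Nat.Coprime.mul_right (coprime_two_pow_prime hp hp2 γ) (coprime_two_pow_prime hq hq2 γ)
  set n := crtRes (2^γ) (p*q) x0 (crtRes p q u v) with hn
  have hnx0 : n ≡ x0 [MOD 2^γ] := crtRes_left hcop2
  have hnu : n ≡ u [MOD p] := by
    have h1 : n ≡ crtRes p q u v [MOD p] :=
      Nat.ModEq.of_dvd (dvd_mul_right p q) (crtRes_right hcop2)
    exact h1.trans (crtRes_left hcopq)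
  have hnv : n ≡ v [MOD q] := by
    have h1 : n ≡ crtRes p q u v [MOD q] :=
      Nat.ModEq.of_dvd (dvd_mul_left q p) (crtRes_right hcop2)
    exact h1.trans (crtRes_right hcopq)
  obtain ⟨c, hc, hmod⟩ := natCovers_of_coversAll hcov n
  obtain ⟨h1c, _⟩ := hS c hc
  obtain ⟨i, hiγ, hform⟩ := hclass c hc
  rcases hform with h | h | h | h
  · have h1i : 1 ≤ i := by
      rcases Nat.eq_zero_or_pos i with rfl | hh
      · rw [h, pow_zero] at h1c; omega
      · exact hh
    refine hx0 c hc i h1i hiγ h ?_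
    have hnx : x0 ≡ n [MOD 2^i] := (Nat.ModEq.of_dvd (pow_dvd_pow 2 hiγ) hnx0).symm
    rw [h] at hmod
    exact hnx.trans hmod
  · have hpc2 : p ∣ c.2 := by rw [h]; exact dvd_mul_left p (2^i)
    have hqc2 : ¬ q ∣ c.2 := by rw [h]; exact hqd2p i
    have hcA : c ∈ Aset := Finset.mem_filter.mpr ⟨hc, hpc2, hqc2⟩
    have hnc : n ≡ c.1 [MOD p] := Nat.ModEq.of_dvd hpc2 hmod
    have heq : c.1 % p = u := by
      have := (hnu.symm.trans hnc : u ≡ c.1 [MOD p])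
      rw [Nat.ModEq, Nat.mod_eq_of_lt huU.1] at this
      exact this.symm
    exact huU.2 (Finset.mem_image.mpr ⟨c, hcA, heq⟩)
  · have hqc2 : q ∣ c.2 := by rw [h]; exact dvd_mul_left q (2^i)
    have hpc2 : ¬ p ∣ c.2 := by rw [h]; exact hpd2q i
    have hcB : c ∈ Bset := Finset.mem_filter.mpr ⟨hc, hqc2, hpc2⟩
    have hnc : n ≡ c.1 [MOD q] := Nat.ModEq.of_dvd hqc2 hmod
    have heq : c.1 % q = v := by
      have := (hnv.symm.trans hnc : v ≡ c.1 [MOD q])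
      rw [Nat.ModEq, Nat.mod_eq_of_lt hvV.1] at this
      exact this.symm
    exact hvV.2 (Finset.mem_image.mpr ⟨c, hcB, heq⟩)
  · have hpc2 : p ∣ c.2 := by rw [h]; exact (dvd_mul_right p q).mul_left (2^i)
    have hqc2 : q ∣ c.2 := by rw [h]; exact (dvd_mul_left q p).mul_left (2^i)
    have hcC : c ∈ Cset := Finset.mem_filter.mpr ⟨hc, hpc2, hqc2⟩
    have hncp : n ≡ c.1 [MOD p] := Nat.ModEq.of_dvd hpc2 hmod
    have hncq : n ≡ c.1 [MOD q] := Nat.ModEq.of_dvd hqc2 hmod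
    have heqp : c.1 % p = u := by
      have := (hnu.symm.trans hncp : u ≡ c.1 [MOD p])
      rw [Nat.ModEq, Nat.mod_eq_of_lt huU.1] at this
      exact this.symm
    have heqq : c.1 % q = v := by
      have := (hnv.symm.trans hncq : v ≡ c.1 [MOD q])
      rw [Nat.ModEq, Nat.mod_eq_of_lt hvV.1] at this
      exact this.symm
    exact hnotC (Finset.mem_image.mpr ⟨c, hcC, by rw [heqp, heqq]⟩)


noncomputable def cc1 (i : ℕ) : ℕ × ℕ := (2^i, 2^(i+1))
noncomputable def cc2 (p i : ℕ) : ℕ × ℕ := (crtRes (2^i) p 0 i, 2^i * p)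
noncomputable def cc4 (p q β i : ℕ) : ℕ × ℕ :=
  (crtRes (2^i) (p*q) 0 (crtRes p q (β+1+i/(q-β-1)) (β+1+i%(q-β-1))), 2^i * (p*q))

lemma cov_construction {p q β : ℕ} (hp : p.Prime) (hq : q.Prime) (hp2 : p ≠ 2) (hq2 : q ≠ 2)
    (hpq : p < q) (hβ : 0 < β) (hβp : β + 3 ≤ p)
    (key : (p - β - 1) * (q - β - 1) ≤ β + 1) :
    IsCoveringNumber (2^β * p * q) := by
  classical
  have hpq' : p ≠ q := hpq.ne
  have hppos : 0 < p := hp.pos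
  have hqpos : 0 < q := hq.pos
  have hp3 : 3 ≤ p := by have := hp.two_le; omega
  have hcopq : Nat.Coprime p q := (Nat.coprime_primes hp hq).mpr hpq'
  have hcop2p : ∀ i, Nat.Coprime (2^i) p := fun i => coprime_two_pow_prime hp hp2 i
  have hcop2q : ∀ i, Nat.Coprime (2^i) q := fun i => coprime_two_pow_prime hq hq2 i
  have hcop2pq : ∀ i, Nat.Coprime (2^i) (p*q) := fun i =>
    Nat.Coprime.mul_right (hcop2p i) (hcop2q i)
  set S : Finset (ℕ × ℕ) :=
    ((Finset.range β).image cc1 ∪ (Finset.range (β+1)).image (cc2 p)) ∪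
      ((Finset.range (β+1)).image (cc2 q) ∪ (Finset.range (β+1)).image (cc4 p q β)) with hS
  have hmemS : ∀ c ∈ S, (∃ i < β, c = cc1 i) ∨ (∃ i < β + 1, c = cc2 p i) ∨
      (∃ i < β + 1, c = cc2 q i) ∨ (∃ i < β + 1, c = cc4 p q β i) := by
    intro c hc
    rw [hS] at hc
    simp only [Finset.mem_union, Finset.mem_image, Finset.mem_range] at hc
    rcases hc with (⟨i, hi, h⟩ | ⟨i, hi, h⟩) | (⟨i, hi, h⟩ | ⟨i, hi, h⟩)
    · exact Or.inl ⟨i, hi, h.symm⟩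
    · exact Or.inr (Or.inl ⟨i, hi, h.symm⟩)
    · exact Or.inr (Or.inr (Or.inl ⟨i, hi, h.symm⟩))
    · exact Or.inr (Or.inr (Or.inr ⟨i, hi, h.symm⟩))
  refine ⟨S, ?_, ?_, ?_⟩
  · -- CoversAll
    refine coversAll_of_natCovers (L := 2^β * p * q) (by positivity) ?_ ?_
    · -- divisibility
      intro c hc
      rcases hmemS c hc with ⟨i, hi, rfl⟩ | ⟨i, hi, rfl⟩ | ⟨i, hi, rfl⟩ | ⟨i, hi, rfl⟩
      · exact dvd_mul_of_dvd_left (dvd_mul_of_dvd_left (pow_dvd_pow 2 (by omega)) p) q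
      · exact dvd_mul_of_dvd_left
          (mul_dvd_mul (pow_dvd_pow 2 (by omega)) dvd_rfl) q
      · rw [show (2:ℕ)^β * p * q = 2^β * q * p by ring]
        exact dvd_mul_of_dvd_left (mul_dvd_mul (pow_dvd_pow 2 (by omega)) dvd_rfl) p
      · rw [show (2:ℕ)^β * p * q = 2^β * (p * q) by ring]
        exact mul_dvd_mul (pow_dvd_pow 2 (by omega)) dvd_rfl
    · -- NatCovers
      intro n
      by_cases h2 : 2^β ∣ n
      · by_cases hpn : n % p ≤ β
        · refine ⟨cc2 p (n % p), ?_, ?_⟩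
          · exact Finset.mem_union_left _ (Finset.mem_union_right _
              (Finset.mem_image.mpr ⟨n % p, Finset.mem_range.mpr (by omega), rfl⟩))
          · show Nat.ModEq (2^(n % p) * p) n _
            have hi : n % p ≤ β := hpn
            refine (Nat.modEq_and_modEq_iff_modEq_mul (hcop2p (n % p))).mp ⟨?_, ?_⟩
            · have h0 : n ≡ 0 [MOD 2^(n % p)] :=
                (Nat.modEq_zero_iff_dvd).mpr ((pow_dvd_pow 2 hi).trans h2)
              exact h0.trans (crtRes_left (hcop2p (n % p))).symm
            · have h0 : n ≡ n % p [MOD p] := (Nat.mod_modEq n p).symm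
              exact h0.trans (crtRes_right (hcop2p (n % p))).symm
        · by_cases hqn : n % q ≤ β
          · refine ⟨cc2 q (n % q), ?_, ?_⟩
            · exact Finset.mem_union_right _ (Finset.mem_union_left _
                (Finset.mem_image.mpr ⟨n % q, Finset.mem_range.mpr (by omega), rfl⟩))
            · show Nat.ModEq (2^(n % q) * q) n _
              refine (Nat.modEq_and_modEq_iff_modEq_mul (hcop2q (n % q))).mp ⟨?_, ?_⟩
              · have h0 : n ≡ 0 [MOD 2^(n % q)] :=
                  (Nat.modEq_zero_iff_dvd).mpr ((pow_dvd_pow 2 hqn).trans h2)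
                exact h0.trans (crtRes_left (hcop2q (n % q))).symm
              · have h0 : n ≡ n % q [MOD q] := (Nat.mod_modEq n q).symm
                exact h0.trans (crtRes_right (hcop2q (n % q))).symm
          · -- pair case
            set Bq := q - β - 1 with hBq
            have hBqpos : 0 < Bq := by omega
            have hnp : n % p < p := Nat.mod_lt n hppos
            have hnq : n % q < q := Nat.mod_lt n hqpos
            set a := n % p - (β+1) with ha
            set b := n % q - (β+1) with hb
            set i := a * Bq + b with hi
            have hiβ : i < β + 1 := by
              have h1 : a * Bq ≤ (p - β - 2) * Bq :=
                Nat.mul_le_mul_right _ (by omega)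
              have h2' : (p - β - 1) * Bq = (p - β - 2) * Bq + Bq := by
                have : p - β - 1 = (p - β - 2) + 1 := by omega
                rw [this, add_mul, one_mul]
              omega
            have hdiv : i / Bq = a := by
              rw [hi, mul_comm a Bq, Nat.mul_add_div hBqpos, Nat.div_eq_of_lt (by omega)]
              omega
            have hmod' : i % Bq = b := by
              rw [hi, mul_comm a Bq, Nat.mul_add_mod, Nat.mod_eq_of_lt (by omega)]
            have hu : β + 1 + i / Bq = n % p := by rw [hdiv]; omega
            have hv : β + 1 + i % Bq = n % q := by rw [hmod']; omega
            refine ⟨cc4 p q β i, ?_, ?_⟩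
            · exact Finset.mem_union_right _ (Finset.mem_union_right _
                (Finset.mem_image.mpr ⟨i, Finset.mem_range.mpr hiβ, rfl⟩))
            · show Nat.ModEq (2^i * (p*q)) n _
              refine (Nat.modEq_and_modEq_iff_modEq_mul (hcop2pq i)).mp ⟨?_, ?_⟩
              · have h0 : n ≡ 0 [MOD 2^i] :=
                  (Nat.modEq_zero_iff_dvd).mpr ((pow_dvd_pow 2 (by omega)).trans h2)
                exact h0.trans (crtRes_left (hcop2pq i)).symm
              · have hcrt : n ≡ crtRes p q (β+1+i/Bq) (β+1+i%Bq) [MOD p*q] := by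
                  refine (Nat.modEq_and_modEq_iff_modEq_mul hcopq).mp ⟨?_, ?_⟩
                  · have h0 : n ≡ β+1+i/Bq [MOD p] := by
                      rw [hu]; exact (Nat.mod_modEq n p).symm
                    exact h0.trans (crtRes_left hcopq).symm
                  · have h0 : n ≡ β+1+i%Bq [MOD q] := by
                      rw [hv]; exact (Nat.mod_modEq n q).symm
                    exact h0.trans (crtRes_right hcopq).symm
                exact hcrt.trans (crtRes_right (hcop2pq i)).symm
      · -- odd part: some 2-power congruence
        have hex : ∃ j, ¬ (2^(j+1) ∣ n) := ⟨β - 1, by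
          have : β - 1 + 1 = β := by omega
          rw [this]; exact h2⟩
        set i := Nat.find hex with hidef
        have hspec : ¬ (2^(i+1) ∣ n) := Nat.find_spec hex
        have hiβ : i < β := by
          have : i ≤ β - 1 := Nat.find_le (by
            have : β - 1 + 1 = β := by omega
            rw [this]; exact h2)
          omega
        have hlow : 2^i ∣ n := by
          rcases Nat.eq_zero_or_pos i with h0 | h0
          · rw [h0, pow_zero]; exact one_dvd n
          · have hmin := Nat.find_min hex (show i - 1 < i by omega)
            rw [not_not] at hmin
            have : i - 1 + 1 = i := by omega
            rwa [this] at hmin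
        refine ⟨cc1 i, ?_, ?_⟩
        · exact Finset.mem_union_left _ (Finset.mem_union_left _
            (Finset.mem_image.mpr ⟨i, Finset.mem_range.mpr hiβ, rfl⟩))
        · show n % 2^(i+1) = 2^i % 2^(i+1)
          obtain ⟨m, hnm⟩ := hlow
          have hrhs : (2:ℕ)^i % 2^(i+1) = 2^i :=
            Nat.mod_eq_of_lt (Nat.pow_lt_pow_right one_lt_two (by omega))
          rw [hrhs, hnm, pow_succ, Nat.mul_mod_mul_left]
          rcases Nat.mod_two_eq_zero_or_one m with hm | hm
          · exfalso
            refine hspec ?_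
            rw [hnm, pow_succ]
            exact mul_dvd_mul_left _ (Nat.dvd_of_mod_eq_zero hm)
          · rw [hm, mul_one]
  · -- DistinctModuli
    have hpd2 : ∀ k : ℕ, ¬ p ∣ 2^k := fun k h =>
      hp2 ((Nat.prime_dvd_prime_iff_eq hp Nat.prime_two).mp (hp.dvd_of_dvd_pow h))
    have hqd2 : ∀ k : ℕ, ¬ q ∣ 2^k := fun k h =>
      hq2 ((Nat.prime_dvd_prime_iff_eq hq Nat.prime_two).mp (hq.dvd_of_dvd_pow h))
    have hqd2p : ∀ k : ℕ, ¬ q ∣ 2^k * p := by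
      intro k h
      rcases (Nat.Prime.dvd_mul hq).mp h with h' | h'
      · exact hqd2 k h'
      · exact hpq' (((Nat.prime_dvd_prime_iff_eq hq hp).mp h').symm)
    have hpd2q : ∀ k : ℕ, ¬ p ∣ 2^k * q := by
      intro k h
      rcases (Nat.Prime.dvd_mul hp).mp h with h' | h'
      · exact hpd2 k h'
      · exact hpq' ((Nat.prime_dvd_prime_iff_eq hp hq).mp h')
    intro c hc c' hc' hmm
    rcases hmemS c hc with ⟨i, hi, rfl⟩ | ⟨i, hi, rfl⟩ | ⟨i, hi, rfl⟩ | ⟨i, hi, rfl⟩ <;>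
      rcases hmemS c' hc' with ⟨j, hj, rfl⟩ | ⟨j, hj, rfl⟩ | ⟨j, hj, rfl⟩ | ⟨j, hj, rfl⟩ <;>
      simp only [cc1, cc2, cc4] at hmm
    · have hij : i = j := by
        have := Nat.pow_right_injective (le_refl 2) hmm; omega
      rw [hij]
    · exact absurd (show p ∣ 2^(i+1) by rw [hmm]; exact dvd_mul_left p (2^j)) (hpd2 (i+1))
    · exact absurd (show q ∣ 2^(i+1) by rw [hmm]; exact dvd_mul_left q (2^j)) (hqd2 (i+1))
    · exact absurd (show p ∣ 2^(i+1) by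
        rw [hmm]; exact (dvd_mul_right p q).mul_left (2^j)) (hpd2 (i+1))
    · exact absurd (show p ∣ 2^(j+1) by rw [← hmm]; exact dvd_mul_left p (2^i)) (hpd2 (j+1))
    · have hij : i = j := by
        have h1 : (2:ℕ)^i = 2^j := Nat.eq_of_mul_eq_mul_right hppos hmm
        have := Nat.pow_right_injective (le_refl 2) h1; omega
      rw [hij]
    · exact absurd (show q ∣ 2^i * p by rw [hmm]; exact dvd_mul_left q (2^j)) (hqd2p i)
    · exact absurd (show q ∣ 2^i * p by
        rw [hmm]; exact (dvd_mul_left q p).mul_left (2^j)) (hqd2p i)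
    · exact absurd (show q ∣ 2^(j+1) by rw [← hmm]; exact dvd_mul_left q (2^i)) (hqd2 (j+1))
    · exact absurd (show q ∣ 2^j * p by rw [← hmm]; exact dvd_mul_left q (2^i)) (hqd2p j)
    · have hij : i = j := by
        have h1 : (2:ℕ)^i = 2^j := Nat.eq_of_mul_eq_mul_right hqpos hmm
        have := Nat.pow_right_injective (le_refl 2) h1; omega
      rw [hij]
    · exact absurd (show p ∣ 2^i * q by
        rw [hmm]; exact (dvd_mul_right p q).mul_left (2^j)) (hpd2q i)
    · exact absurd (show p ∣ 2^(j+1) by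
        rw [← hmm]; exact (dvd_mul_right p q).mul_left (2^i)) (hpd2 (j+1))
    · exact absurd (show q ∣ 2^j * p by
        rw [← hmm]; exact (dvd_mul_left q p).mul_left (2^i)) (hqd2p j)
    · exact absurd (show p ∣ 2^j * q by
        rw [← hmm]; exact (dvd_mul_right p q).mul_left (2^i)) (hpd2q j)
    · have hij : i = j := by
        have h1 : (2:ℕ)^i = 2^j :=
          Nat.eq_of_mul_eq_mul_right (by positivity) hmm
        have := Nat.pow_right_injective (le_refl 2) h1; omega
      rw [hij]
  · -- bounds and dvd
    intro c hc
    rcases hmemS c hc with ⟨i, hi, rfl⟩ | ⟨i, hi, rfl⟩ | ⟨i, hi, rfl⟩ | ⟨i, hi, rfl⟩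
    · constructor
      · exact Nat.one_lt_two_pow_iff.mpr (by omega)
      · exact dvd_mul_of_dvd_left (dvd_mul_of_dvd_left (pow_dvd_pow 2 (by omega)) p) q
    · constructor
      · have : 1 ≤ 2^i := Nat.one_le_two_pow
        have := hp.two_le
        calc 1 < p := by omega
        _ ≤ 2^i * p := Nat.le_mul_of_pos_left p (by positivity)
      · exact dvd_mul_of_dvd_left (mul_dvd_mul (pow_dvd_pow 2 (by omega)) dvd_rfl) q
    · constructor
      · have := hq.two_le
        calc 1 < q := by omega
        _ ≤ 2^i * q := Nat.le_mul_of_pos_left q (by positivity)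
      · rw [show (2:ℕ)^β * p * q = 2^β * q * p by ring]
        exact dvd_mul_of_dvd_left (mul_dvd_mul (pow_dvd_pow 2 (by omega)) dvd_rfl) p
    · constructor
      · have := hp.two_le
        have := hq.two_le
        have h1 : 1 < p * q := by nlinarith
        calc 1 < p * q := h1
        _ ≤ 2^i * (p * q) := Nat.le_mul_of_pos_left _ (by positivity)
      · rw [show (2:ℕ)^β * p * q = 2^β * (p * q) by ring]
        exact mul_dvd_mul (pow_dvd_pow 2 (by omega)) dvd_rfl

lemma primeFactors_sort {p q β : ℕ} (hp : p.Prime) (hq : q.Prime) (h2p : 2 < p)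
    (hpq : p < q) (hβ : 0 < β) :
    ((2^β * p * q).primeFactors.sort (· ≤ ·)) = [2, p, q] := by
  have hpf : (2^β * p * q).primeFactors = insert 2 (insert p {q}) := by
    rw [Nat.primeFactors_mul (by positivity) hq.pos.ne',
      Nat.primeFactors_mul (by positivity) hp.pos.ne',
      Nat.primeFactors_pow _ hβ.ne', Nat.Prime.primeFactors Nat.prime_two,
      hp.primeFactors, hq.primeFactors]
    ext x
    simp [or_assoc]
  rw [hpf]
  have h1 : ∀ b ∈ ({q} : Finset ℕ), p ≤ b := by
    intro b hb
    simp only [Finset.mem_singleton] at hb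
    omega
  have h2 : p ∉ ({q} : Finset ℕ) := by
    simp only [Finset.mem_singleton]
    omega
  have h3 : ∀ b ∈ insert p ({q} : Finset ℕ), 2 ≤ b := by
    intro b hb
    simp only [Finset.mem_insert, Finset.mem_singleton] at hb
    rcases hb with rfl | rfl <;> omega
  have h4 : 2 ∉ insert p ({q} : Finset ℕ) := by
    simp only [Finset.mem_insert, Finset.mem_singleton]
    push_neg
    constructor <;> omega
  rw [Finset.sort_insert _ h3 h4, Finset.sort_insert _ h1 h2, Finset.sort_singleton]

lemma sun_fails {p q β : ℕ} (hp : p.Prime) (hq : q.Prime) (h2p : 2 < p) (hpq : p < q)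
    (hβ : 0 < β) (hβp : β + 3 ≤ p) : ¬ SunCondition (2^β * p * q) := by
  have hp2 : p ≠ 2 := by omega
  have hq2 : q ≠ 2 := by omega
  have hpq' : p ≠ q := hpq.ne
  have hsort := primeFactors_sort hp hq h2p hpq hβ (β := β)
  have hfact2 : (2^β * p * q).factorization 2 = β := by
    have := (fact_pow_mul_pow_mul_pow (i := β) (e := 1) (f := 1) hp hq hp2 hq2 hpq').1
    simpa [pow_one] using this
  intro h
  have h1 := h 1 (by rw [hsort]; norm_num)
  rw [hsort] at h1
  have he1 : (([2, p, q].take 1).map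
      (fun r => (2^β*p*q).factorization r + 1)).prod = β + 1 := by
    simp [hfact2]
  have he2 : ([2, p, q].getD 1 0) = p := rfl
  have he3 : (if 1 = [2, p, q].length - 1 then (1:ℕ) else 0) = 0 := by norm_num
  rw [he1, he2, he3] at h1
  omega

lemma bsel_ex (p q : ℕ) : ∃ β, (p - β - 1) * (q - β - 1) ≤ β + 1 :=
  ⟨p, by simp [Nat.sub_self]⟩

noncomputable def bsel (p q : ℕ) : ℕ := Nat.find (bsel_ex p q)

lemma bsel_spec (p q : ℕ) : (p - bsel p q - 1) * (q - bsel p q - 1) ≤ bsel p q + 1 :=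
  Nat.find_spec (bsel_ex p q)

lemma bsel_min {p q i : ℕ} (h : i < bsel p q) : ¬ ((p - i - 1) * (q - i - 1) ≤ i + 1) :=
  Nat.find_min (bsel_ex p q) h

lemma package {p q : ℕ} (hp : p.Prime) (hq : q.Prime) (hpq : p < q) (hp30 : 30 ≤ p)
    (hqp : 2 * q + 6 ≤ 3 * p) :
    0 < bsel p q ∧ bsel p q + 3 ≤ p ∧
      IsPrimitiveCoveringNumber (2^(bsel p q) * p * q) ∧
      ¬ SunCondition (2^(bsel p q) * p * q) := by
  have hp2 : p ≠ 2 := by omega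
  have hq2 : q ≠ 2 := by omega
  have hpq' : p ≠ q := hpq.ne
  set β := bsel p q with hβdef
  have hkey : (p - β - 1) * (q - β - 1) ≤ β + 1 := bsel_spec p q
  have hβle : β ≤ p - 3 := by
    rw [hβdef]
    refine Nat.find_le ?_
    have h1 : p - (p-3) - 1 = 2 := by omega
    have h2 : q - (p-3) - 1 = q - p + 2 := by omega
    rw [h1, h2]
    omega
  have hβpos : 0 < β := by
    rcases Nat.eq_zero_or_pos β with h0 | h0
    · exfalso
      rw [h0] at hkey
      simp only [Nat.sub_zero] at hkey
      have h1 : 29 ≤ p - 1 := by omega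
      have h2 : 30 ≤ q - 1 := by omega
      have h3 : 29 * 30 ≤ (p - 1) * (q - 1) := Nat.mul_le_mul h1 h2
      omega
    · exact h0
  refine ⟨hβpos, by omega, ⟨?_, ?_⟩, ?_⟩
  · exact cov_construction hp hq hp2 hq2 hpq hβpos (by omega) hkey
  · intro d hdvd hdne hdcov
    have hdvd' : d ∣ 2^β * (p*q) := by rwa [mul_assoc] at hdvd
    obtain ⟨i, hiβ, e, he, hform⟩ := dvd_two_pow_mul hdvd'
    rcases dvd_prime_mul hp hq he with h1 | h1 | h1 | h1 <;> rw [h1] at hform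
    · rw [mul_one] at hform
      exact not_cov_pow i (hform ▸ hdcov)
    · exact not_cov_pow_mul_prime hp hp2 (show i+1 < p by omega) (hform ▸ hdcov)
    · exact not_cov_pow_mul_prime hq hq2 (show i+1 < q by omega) (hform ▸ hdcov)
    · have hiβ' : i ≠ β := by
        intro hh
        apply hdne
        rw [hform, hh, mul_assoc]
      have hilt : i < β := by omega
      have hmin := bsel_min (p := p) (q := q) hilt
      have hkey2 : i + 1 < (p - (i+1)) * (q - (i+1)) := by
        have e1 : p - i - 1 = p - (i+1) := by omega
        have e2 : q - i - 1 = q - (i+1) := by omega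
        rw [← e1, ← e2]
        omega
      refine not_cov_pow_mul_two_primes hp hq hp2 hq2 hpq' (by omega) (by omega) hkey2 ?_
      rw [← mul_assoc] at hform
      exact hform ▸ hdcov
  · exact sun_fails hp hq (by omega) hpq hβpos (by omega)


open Nat in
lemma good_indices_infinite :
    {k : ℕ | 30 ≤ Nat.nth Nat.Prime k ∧
      2 * Nat.nth Nat.Prime (k+1) + 6 ≤ 3 * Nat.nth Nat.Prime k}.Infinite := by
  classical
  by_contra hfin
  rw [Set.not_infinite] at hfin
  have hinf : (setOf Nat.Prime).Infinite := Nat.infinite_setOf_prime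
  -- a bound beyond which no index is good
  obtain ⟨K0, hK0⟩ := hfin.bddAbove
  set K := K0 + 31 with hK
  have hKnotmem : ∀ m : ℕ, ¬ (30 ≤ Nat.nth Nat.Prime (K+m) ∧
      2 * Nat.nth Nat.Prime (K+m+1) + 6 ≤ 3 * Nat.nth Nat.Prime (K+m)) := by
    intro m hm
    have := hK0 hm
    omega
  have hself : ∀ k : ℕ, k ≤ Nat.nth Nat.Prime k :=
    fun k => (Nat.nth_strictMono hinf).le_apply
  have hgrow : ∀ m : ℕ, (30:ℝ) * (7/5)^m ≤ (Nat.nth Nat.Prime (K+m) : ℝ) := by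
    intro m
    induction m with
    | zero =>
      simp only [pow_zero, mul_one, Nat.add_zero]
      have h31 : (31:ℕ) ≤ Nat.nth Nat.Prime K := le_trans (by omega) (hself K)
      have h31' : (31:ℝ) ≤ (Nat.nth Nat.Prime K : ℝ) := by exact_mod_cast h31
      linarith
    | succ m ih =>
      have hge1 : (1:ℝ) ≤ (7/5)^m := one_le_pow₀ (by norm_num)
      have h30 : (30:ℝ) ≤ (Nat.nth Nat.Prime (K+m) : ℝ) := le_trans (by nlinarith) ih
      have h30' : 30 ≤ Nat.nth Nat.Prime (K+m) := by exact_mod_cast h30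
      have hnot := hKnotmem m
      push_neg at hnot
      have hgap := hnot h30'
      have hgap' : (3:ℝ) * (Nat.nth Nat.Prime (K+m) : ℝ) <
          2 * (Nat.nth Nat.Prime (K+m+1) : ℝ) + 6 := by exact_mod_cast hgap
      have : (K + (m+1)) = (K + m + 1) := by omega
      rw [this]
      rw [pow_succ]
      nlinarith [ih, hge1]
  -- summability of 1 / nth prime
  have hsum : Summable (fun k : ℕ => (1:ℝ) / (Nat.nth Nat.Prime k)) := by
    rw [← summable_nat_add_iff K]
    have hgeo : Summable (fun m : ℕ => ((5:ℝ)/7)^m) :=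
      summable_geometric_of_lt_one (by norm_num) (by norm_num)
    refine Summable.of_nonneg_of_le (fun m => by positivity) (fun m => ?_) hgeo
    have hpos : (0:ℝ) < (7/5)^m := by positivity
    have h1 : ((7:ℝ)/5)^m ≤ (Nat.nth Nat.Prime (m+K) : ℝ) := by
      have := hgrow m
      rw [show m + K = K + m by omega]
      nlinarith
    have h2 : (1:ℝ) / (Nat.nth Nat.Prime (m+K) : ℝ) ≤ 1 / ((7:ℝ)/5)^m :=
      one_div_le_one_div_of_le hpos h1
    refine h2.trans (le_of_eq ?_)
    rw [one_div, ← inv_pow]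
    norm_num
  -- contradiction with divergence of sum of prime reciprocals
  have hprime : ∀ k : ℕ, (Nat.nth Nat.Prime k).Prime := Nat.prime_nth_prime
  let e : ℕ ≃ Nat.Primes :=
    Equiv.ofBijective (fun k => ⟨Nat.nth Nat.Prime k, hprime k⟩)
      ⟨fun a b h => Nat.nth_injective hinf (congrArg Subtype.val h),
       fun x => ⟨Nat.count Nat.Prime x.1, Subtype.ext (Nat.nth_count x.2)⟩⟩
  have hcomp : (fun k : ℕ => (1:ℝ) / (Nat.nth Nat.Prime k)) =
      (fun p : Nat.Primes => (1 / p : ℝ)) ∘ e := rfl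
  rw [hcomp] at hsum
  exact Nat.Primes.not_summable_one_div (e.summable_iff.mp hsum)

theorem infinitely_many_primitive_covering_numbers_failing_sun :
    {L : ℕ | (∃ β k : ℕ, 0 < β ∧ β ≤ Nat.nth Nat.Prime k - 3 ∧
        L = 2 ^ β * Nat.nth Nat.Prime k * Nat.nth Nat.Prime (k + 1)) ∧
      IsPrimitiveCoveringNumber L ∧ ¬ SunCondition L}.Infinite := by
  classical
  have hinf : (setOf Nat.Prime).Infinite := Nat.infinite_setOf_prime
  set G : Set ℕ := {k : ℕ | 30 ≤ Nat.nth Nat.Prime k ∧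
      2 * Nat.nth Nat.Prime (k+1) + 6 ≤ 3 * Nat.nth Nat.Prime k} with hG
  set g : ℕ → ℕ := fun k =>
    2 ^ (bsel (Nat.nth Nat.Prime k) (Nat.nth Nat.Prime (k+1))) *
      Nat.nth Nat.Prime k * Nat.nth Nat.Prime (k+1) with hg
  have hmono : ∀ {a b : ℕ}, a < b → Nat.nth Nat.Prime a < Nat.nth Nat.Prime b :=
    fun h => (Nat.nth_lt_nth hinf).mpr h
  have hpk : ∀ k, (Nat.nth Nat.Prime k).Prime := Nat.prime_nth_prime
  have hpkq : ∀ k, Nat.nth Nat.Prime k < Nat.nth Nat.Prime (k+1) := fun k => hmono (by omega)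
  have hpackage : ∀ k ∈ G,
      0 < bsel (Nat.nth Nat.Prime k) (Nat.nth Nat.Prime (k+1)) ∧
      bsel (Nat.nth Nat.Prime k) (Nat.nth Nat.Prime (k+1)) + 3 ≤ Nat.nth Nat.Prime k ∧
      IsPrimitiveCoveringNumber (g k) ∧ ¬ SunCondition (g k) :=
    fun k hk => package (hpk k) (hpk (k+1)) (hpkq k) hk.1 hk.2
  have hsubset : g '' G ⊆ {L : ℕ | (∃ β k : ℕ, 0 < β ∧ β ≤ Nat.nth Nat.Prime k - 3 ∧
      L = 2 ^ β * Nat.nth Nat.Prime k * Nat.nth Nat.Prime (k + 1)) ∧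
      IsPrimitiveCoveringNumber L ∧ ¬ SunCondition L} := by
    rintro L ⟨k, hk, rfl⟩
    obtain ⟨h1, h2, h3, h4⟩ := hpackage k hk
    exact ⟨⟨bsel (Nat.nth Nat.Prime k) (Nat.nth Nat.Prime (k+1)), k, h1, by omega, rfl⟩, h3, h4⟩
  have hinj : Set.InjOn g G := by
    intro a ha b hb hab
    by_contra hne
    -- wlog a < b
    have key : ∀ a b : ℕ, a < b → g a ≠ g b := by
      intro a b hlt heq
      have hdvd : Nat.nth Nat.Prime (b+1) ∣ g a := by
        rw [heq, hg]
        exact dvd_mul_left _ _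
      have hq := hpk (b+1)
      rw [hg] at hdvd
      rcases (Nat.Prime.dvd_mul hq).mp hdvd with h | h
      · rcases (Nat.Prime.dvd_mul hq).mp h with h' | h'
        · have := (Nat.prime_dvd_prime_iff_eq hq Nat.prime_two).mp (hq.dvd_of_dvd_pow h')
          have h2 := (hpk (b+1)).two_le
          have h3 := hmono (show 0 < b + 1 by omega)
          have h4 := (hpk 0).two_le
          have h0 : Nat.nth Nat.Prime 0 = 2 := Nat.nth_count Nat.prime_two
          omega
        · have := (Nat.prime_dvd_prime_iff_eq hq (hpk a)).mp h'
          have := hmono (show a < b + 1 by omega)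
          omega
      · have := (Nat.prime_dvd_prime_iff_eq hq (hpk (a+1))).mp h
        have := hmono (show a + 1 < b + 1 by omega)
        omega
    rcases lt_trichotomy a b with h | h | h
    · exact key a b h hab
    · exact hne h
    · exact key b a h hab.symm
  exact Set.Infinite.mono hsubset ((good_indices_infinite).image hinj)
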